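/- For every natural number k and every j with 0 ≤ j ≤ k, the following identity of rational numbers holds: (j!/k!) · ∑ t₁t₂⋯t_{k−j} = ∑ 1/(i₁i₂⋯i_j), where the left-hand sum runs over all strictly increasing sequences 0 < t₁ < t₂ < ⋯ < t_{k−j} < k of integers (equivalently, over all subsets of {1,…,k−1} of cardinality k−j, the summand being the product of the elements), and the right-hand sum runs over all ordered j-tuples (i₁,…,i_j) of positive integers with i₁+⋯+i_j = k. -/

import Mathlib

open Finset

namespace CombIdent

/-- Compositions: tuples in `[1,N]^j` with sum `k`. -/
def C (N k j : ℕ) : Finset (Fin j → ℕ) :=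
  (Fintype.piFinset fun _ : Fin j => Finset.Icc 1 N).filter (fun f => ∑ i, f i = k)

lemma mem_C {N k j : ℕ} {f : Fin j → ℕ} :
    f ∈ C N k j ↔ (∀ i, 1 ≤ f i ∧ f i ≤ N) ∧ ∑ i, f i = k := by
  simp [C, Fintype.mem_piFinset, Finset.mem_Icc]

lemma C_eq {N k : ℕ} (j : ℕ) (h : k ≤ N) : C N k j = C k k j := by
  ext f
  simp only [mem_C]
  constructor
  · rintro ⟨h1, h2⟩
    refine ⟨fun i => ⟨(h1 i).1, ?_⟩, h2⟩
    calc f i ≤ ∑ i, f i := Finset.single_le_sum (fun i _ => Nat.zero_le _) (mem_univ i)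
      _ = k := h2
  · rintro ⟨h1, h2⟩
    exact ⟨fun i => ⟨(h1 i).1, le_trans (h1 i).2 h⟩, h2⟩

def R (k j : ℕ) : ℚ := ∑ f ∈ C k k j, ∏ i, (1 : ℚ) / (f i : ℚ)

def L (k j : ℕ) : ℚ :=
  ∑ A ∈ Finset.powersetCard (k - j) (Finset.Icc 1 (k - 1)), ∏ t ∈ A, (t : ℚ)

lemma R_zero : R 0 0 = 1 := by
  rw [R]
  rw [show C 0 0 0 = {fun _ : Fin 0 => 1} from by
    ext f; simp [mem_C, funext_iff, Fin.forall_fin_zero_pi]]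
  simp

lemma R_succ_zero (k : ℕ) : R (k+1) 0 = 0 := by
  rw [R]
  rw [show C (k+1) (k+1) 0 = ∅ from by
    rw [Finset.eq_empty_iff_forall_notMem]; intro f hf; rw [mem_C] at hf; simpa using hf.2]
  simp

lemma R_overflow (k : ℕ) : R k (k+1) = 0 := by
  rw [R]
  rw [show C k k (k+1) = ∅ from by
    rw [Finset.eq_empty_iff_forall_notMem]
    intro f hf
    rw [mem_C] at hf
    have : k + 1 ≤ ∑ i, f i := by
      calc k + 1 = ∑ _i : Fin (k+1), 1 := by simp
        _ ≤ ∑ i, f i := Finset.sum_le_sum fun i _ => (hf.1 i).1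
    omega]
  simp

lemma L_diag (k : ℕ) : L k k = 1 := by
  simp [L, Finset.powersetCard_zero]

lemma L_succ_zero (k : ℕ) : L (k+1) 0 = 0 := by
  rw [L]
  rw [show Finset.powersetCard (k+1-0) (Finset.Icc 1 (k+1-1)) = ∅ from by
    rw [Finset.powersetCard_eq_empty]; simp [Nat.card_Icc]]
  simp

/-- Key step 1: pulling out one coordinate. -/
lemma S1 (n j : ℕ) :
    (n : ℚ) * R n (j+1)
      = ∑ s : Fin (j+1), ∑ f ∈ C n n (j+1), ∏ i : Fin j, (1:ℚ) / (f (s.succAbove i) : ℚ) := by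
  rw [R, Finset.mul_sum, Finset.sum_comm]
  apply Finset.sum_congr rfl
  intro f hf
  rw [mem_C] at hf
  have hfs : ∀ s, (f s : ℚ) ≠ 0 := fun s =>
    Nat.cast_ne_zero.mpr (by have := (hf.1 s).1; omega)
  have key : ∀ s : Fin (j+1),
      (f s : ℚ) * ∏ i : Fin (j+1), (1:ℚ)/(f i : ℚ)
        = ∏ i : Fin j, (1:ℚ)/(f (s.succAbove i) : ℚ) := by
    intro s
    rw [Fin.prod_univ_succAbove (fun t => (1:ℚ)/(f t : ℚ)) s, ← mul_assoc,
      mul_one_div_cancel (hfs s), one_mul]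
  calc (n:ℚ) * ∏ i, (1:ℚ)/(f i : ℚ)
      = (∑ s, (f s : ℚ)) * ∏ i, (1:ℚ)/(f i : ℚ) := by
        rw [show ((n:ℚ)) = ((∑ i, f i : ℕ) : ℚ) by rw [hf.2], Nat.cast_sum]
    _ = ∑ s, (f s : ℚ) * ∏ i, (1:ℚ)/(f i : ℚ) := by rw [Finset.sum_mul]
    _ = _ := Finset.sum_congr rfl fun s _ => key s

lemma prod_succAbove_erase {j : ℕ} (f : Fin (j+1) → ℕ) (hf : ∀ t, f t ≠ 0) (s : Fin (j+1)) :
    ∏ i : Fin j, (1:ℚ) / (f (s.succAbove i) : ℚ)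
      = ∏ t ∈ Finset.univ.erase s, (1:ℚ) / (f t : ℚ) := by
  have h1 := Fin.prod_univ_succAbove (fun t => (1:ℚ)/(f t : ℚ)) s
  have h2 := Finset.mul_prod_erase Finset.univ (fun t => (1:ℚ)/(f t : ℚ)) (Finset.mem_univ s)
  have hs : (1:ℚ)/(f s : ℚ) ≠ 0 := one_div_ne_zero (Nat.cast_ne_zero.mpr (hf s))
  apply mul_left_cancel₀ hs
  rw [← h1, ← h2]

/-- Key step 2: symmetry in `s`. -/
lemma S2 (n j : ℕ) (s : Fin (j+1)) :
    ∑ f ∈ C n n (j+1), ∏ i : Fin j, (1:ℚ) / (f (s.succAbove i) : ℚ)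
      = ∑ f ∈ C n n (j+1), ∏ i : Fin j, (1:ℚ) / (f i.succ : ℚ) := by
  set σ := Equiv.swap (0 : Fin (j+1)) s with hσ
  have hmem : ∀ f, f ∈ C n n (j+1) → (f ∘ σ) ∈ C n n (j+1) := by
    intro f hf
    rw [mem_C] at hf ⊢
    exact ⟨fun i => hf.1 (σ i),
      by rw [show (∑ i, (f ∘ σ) i) = ∑ i, f i from Equiv.sum_comp σ f]; exact hf.2⟩
  refine Finset.sum_nbij' (fun f => f ∘ σ) (fun f => f ∘ σ) hmem hmem ?_ ?_ ?_
  · intro f _; ext t; simp [σ, Equiv.swap_apply_self]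
  · intro f _; ext t; simp [σ, Equiv.swap_apply_self]
  · intro f hf
    rw [mem_C] at hf
    have hnz : ∀ t, f t ≠ 0 := fun t => by have := (hf.1 t).1; omega
    have hnz2 : ∀ t, (f ∘ σ) t ≠ 0 := fun t => hnz (σ t)
    rw [show (fun i : Fin j => (1:ℚ)/((f ∘ σ) i.succ : ℚ))
        = fun i => (1:ℚ)/((f ∘ σ) ((0:Fin (j+1)).succAbove i)) from by
      funext i; rw [Fin.zero_succAbove]]
    rw [prod_succAbove_erase f hnz s, prod_succAbove_erase (f ∘ σ) hnz2 0]
    simp only [Function.comp_apply]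
    have himg : ∏ t ∈ (Finset.univ.erase (0 : Fin (j+1))).image σ, (1:ℚ)/(f t : ℚ)
        = ∏ t ∈ Finset.univ.erase (0 : Fin (j+1)), (1:ℚ)/(f (σ t) : ℚ) :=
      Finset.prod_image (fun a _ b _ h => σ.injective h)
    rw [← himg, Finset.image_erase σ.injective,
      Finset.image_univ_of_surjective σ.surjective, Equiv.swap_apply_left]

/-- Key step 3: splitting off the first coordinate. -/
lemma S3 (n j : ℕ) :
    ∑ f ∈ C n n (j+1), ∏ i : Fin j, (1:ℚ) / (f i.succ : ℚ)
      = ∑ b ∈ Finset.range n, R b j := by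
  have hR : ∀ b ∈ Finset.range n, R b j = ∑ g ∈ C n b j, ∏ i, (1:ℚ)/(g i : ℚ) := by
    intro b hb
    rw [R, C_eq j (le_of_lt (Finset.mem_range.mp hb))]
  rw [Finset.sum_congr rfl hR, Finset.sum_sigma']
  refine Finset.sum_nbij' (fun f => ⟨∑ i : Fin j, f i.succ, Fin.tail f⟩)
    (fun p => Fin.cons (n - p.1) p.2) ?_ ?_ ?_ ?_ ?_
  · intro f hf
    rw [mem_C] at hf
    have hsum := hf.2
    rw [Fin.sum_univ_succ] at hsum
    have h0 := (hf.1 0).1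
    rw [Finset.mem_sigma, Finset.mem_range]
    constructor
    · dsimp only
      omega
    · rw [mem_C]
      exact ⟨fun i => hf.1 i.succ, rfl⟩
  · rintro ⟨b, g⟩ hp
    rw [Finset.mem_sigma, Finset.mem_range] at hp
    obtain ⟨hb, hg⟩ := hp
    dsimp only at hb hg
    rw [mem_C] at hg ⊢
    constructor
    · intro i
      refine Fin.cases ?_ ?_ i
      · simp only [Fin.cons_zero]; omega
      · intro i'; simp only [Fin.cons_succ]; exact hg.1 i'
    · rw [Fin.sum_univ_succ]
      simp only [Fin.cons_zero, Fin.cons_succ]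
      rw [hg.2]; omega
  · intro f hf
    rw [mem_C] at hf
    have hsum := hf.2
    rw [Fin.sum_univ_succ] at hsum
    have : n - ∑ i : Fin j, f i.succ = f 0 := by omega
    simp only [this]
    exact Fin.cons_self_tail f
  · rintro ⟨b, g⟩ hp
    rw [Finset.mem_sigma, Finset.mem_range] at hp
    obtain ⟨hb, hg⟩ := hp
    dsimp only at hb hg
    rw [mem_C] at hg
    simp [Fin.cons_succ, Fin.tail_cons, hg.2]
  · intro f _
    rfl

lemma Rrec (k j : ℕ) :
    ((k : ℚ) + 1) * R (k+1) (j+1) = (k : ℚ) * R k (j+1) + ((j : ℚ) + 1) * R k j := by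
  have h1 := S1 (k+1) j
  have h2 := S1 k j
  simp only [fun s => S2 (k+1) j s, fun s => S2 k j s, Finset.sum_const, card_univ,
    Fintype.card_fin, nsmul_eq_mul, S3] at h1 h2
  push_cast at h1 h2 ⊢
  rw [Finset.sum_range_succ] at h1
  rw [h1, h2]
  ring

lemma R_diag (k : ℕ) : R (k+1) (k+1) = R k k := by
  have h := Rrec k k
  rw [R_overflow k] at h
  have hk : ((k:ℚ) + 1) ≠ 0 := by positivity
  rw [mul_zero, zero_add] at h
  exact mul_left_cancel₀ hk h

lemma L_rec (k j : ℕ) (h : j < k) : L (k+1) (j+1) = L k j + (k : ℚ) * L k (j+1) := by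
  have hins : Finset.Icc 1 k = insert k (Finset.Icc 1 (k-1)) := by
    ext x; simp only [Finset.mem_Icc, Finset.mem_insert]; omega
  have hnot : k ∉ Finset.Icc 1 (k-1) := by simp only [Finset.mem_Icc]; omega
  have hd : k - j = (k - j - 1) + 1 := by omega
  have hdj : k - (j+1) = k - j - 1 := by omega
  rw [L, L, L, hdj, show (k+1) - (j+1) = k - j from by omega,
    show (k+1) - 1 = k from by omega, hins, hd, Finset.powersetCard_succ_insert hnot]
  have hdisj : Disjoint (Finset.powersetCard (k - j - 1 + 1) (Finset.Icc 1 (k-1)))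
      ((Finset.powersetCard (k - j - 1) (Finset.Icc 1 (k-1))).image (insert k)) := by
    rw [Finset.disjoint_left]
    intro A hA hA'
    rw [Finset.mem_powersetCard] at hA
    obtain ⟨B, hB, rfl⟩ := Finset.mem_image.mp hA'
    exact hnot (hA.1 (Finset.mem_insert_self k B))
  rw [Finset.sum_union hdisj]
  congr 1
  rw [Finset.sum_image ?_]
  · rw [Finset.mul_sum]
    apply Finset.sum_congr rfl
    intro A hA
    rw [Finset.mem_powersetCard] at hA
    have hkA : k ∉ A := fun hk => hnot (hA.1 hk)
    rw [Finset.prod_insert hkA]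
  · intro A hA B hB hAB
    rw [Finset.mem_coe, Finset.mem_powersetCard] at hA hB
    have hkA : k ∉ A := fun hk => hnot (hA.1 hk)
    have hkB : k ∉ B := fun hk => hnot (hB.1 hk)
    rw [← Finset.erase_insert hkA, ← Finset.erase_insert hkB, hAB]

theorem main (k : ℕ) : ∀ j ≤ k, (j.factorial : ℚ) * L k j = (k.factorial : ℚ) * R k j := by
  induction k with
  | zero =>
    intro j hj
    interval_cases j
    rw [L_diag, R_zero]
  | succ k ih =>
    intro j hj
    match j with
    | 0 => rw [L_succ_zero, R_succ_zero]; ring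
    | j' + 1 =>
      rcases eq_or_lt_of_le (Nat.succ_le_succ_iff.mp hj) with heq | hlt
      · subst heq
        have hRkk : R j' j' = 1 := by
          have h := ih j' le_rfl
          rw [L_diag] at h
          have hfact : (j'.factorial : ℚ) ≠ 0 := Nat.cast_ne_zero.mpr j'.factorial_ne_zero
          field_simp at h
          linarith
        rw [L_diag, R_diag, hRkk]
      · have ih1 := ih j' (le_of_lt hlt)
        have ih2 := ih (j'+1) hlt
        have hrec := Rrec k j'
        rw [L_rec k j' hlt]
        push_cast [Nat.factorial_succ] at ih1 ih2 hrec ⊢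
        linear_combination ((j':ℚ)+1) * ih1 + (k:ℚ) * ih2 - (k.factorial:ℚ) * hrec

end CombIdent

/-- Combinatorial identity: `(j!/k!) · ∑_{0<t₁<⋯<t_{k−j}<k} t₁⋯t_{k−j}
  = ∑_{i₁+⋯+i_j=k, iₛ ≥ 1} 1/(i₁⋯i_j)`.  The left sum runs over subsets of
  `{1,…,k−1}` of cardinality `k−j`; the right sum over ordered `j`-tuples of
  positive integers summing to `k` (each entry automatically lies in `[1,k]`). -/
theorem combinatorial_identity (k j : ℕ) (hj : j ≤ k) :
    (j.factorial : ℚ) / (k.factorial : ℚ) *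
        ∑ A ∈ Finset.powersetCard (k - j) (Finset.Icc 1 (k - 1)), ∏ t ∈ A, (t : ℚ)
      = ∑ f ∈ (Fintype.piFinset fun _ : Fin j => Finset.Icc 1 k).filter
            (fun f => ∑ i, f i = k),
          ∏ i, (1 : ℚ) / (f i : ℚ) := by
  have h := CombIdent.main k j hj
  have hk : (k.factorial : ℚ) ≠ 0 := Nat.cast_ne_zero.mpr k.factorial_ne_zero
  have : (j.factorial : ℚ) / (k.factorial : ℚ) * CombIdent.L k j = CombIdent.R k j := by
    field_simp
    linarith [h]
  exact this
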